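/- The triple Λ = (W_j, Λ_j, v_j) is a g-fusion frame for H (i.e. there exist 0 < A ≤ B < ∞ with A‖f‖² ≤ Σ_{j∈J} v_j² ‖Λ_j π_{W_j} f‖² ≤ B‖f‖² for all f ∈ H) if and only if the synthesis operator T_Λ : ℋ₂ → H, T_Λ({g_j}) = Σ_{j∈J} v_j π_{W_j} Λ_j* g_j, is well defined, bounded and surjective. -/

import Mathlib

open scoped InnerProductSpace ENNReal NNReal
open ContinuousLinearMap

/-- The orthogonal projection of `H` onto the closed subspace `W j`, as a map `H →L[ℂ] H`. -/
noncomputable def gfProj {H : Type*} [NormedAddCommGroup H] [InnerProductSpace ℂ H]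
    {J : Type*} (W : J → Submodule ℂ H) [∀ j, CompleteSpace (W j)] (j : J) : H →L[ℂ] H :=
  (W j).subtypeL.comp ((W j).orthogonalProjectionOnto)

lemma gf_rpow_two (x : ℝ) : x ^ ((2:ℝ≥0∞)).toReal = x ^ 2 := by
  rw [ENNReal.toReal_ofNat, show ((2:ℝ)) = ((2:ℕ):ℝ) by norm_num, Real.rpow_natCast]

section Aux
variable {H : Type*} [NormedAddCommGroup H] [InnerProductSpace ℂ H] [CompleteSpace H]
    {J : Type*}
    {Hs : J → Type*} [∀ j, NormedAddCommGroup (Hs j)] [∀ j, InnerProductSpace ℂ (Hs j)]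
    [∀ j, CompleteSpace (Hs j)]
    (W : J → Submodule ℂ H) [∀ j, CompleteSpace (W j)]
    (v : J → ℝ) (Λ : ∀ j, H →L[ℂ] Hs j)

lemma gf_norm_sq_lp (x : lp Hs 2) : ‖x‖ ^ 2 = ∑' j, ‖x j‖ ^ 2 := by
  have := lp.norm_rpow_eq_tsum (p := 2) (by norm_num) x
  simpa only [gf_rpow_two] using this

lemma gf_summable_sq (x : lp Hs 2) : Summable fun j => ‖x j‖ ^ 2 := by
  have := (memℓp_gen_iff (p := 2) (by norm_num)).1 (lp.memℓp x)
  simpa only [gf_rpow_two] using this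

lemma gf_inner_term (f : H) (j : J) (x : Hs j) :
    ⟪f, v j • gfProj W j ((adjoint (Λ j)) x)⟫_ℂ = (v j : ℂ) * ⟪Λ j (gfProj W j f), x⟫_ℂ := by
  rw [← Complex.coe_smul, inner_smul_right]
  simp only [gfProj, ContinuousLinearMap.comp_apply, Submodule.subtypeL_apply]
  rw [← Submodule.inner_orthogonalProjectionOnto_eq_of_mem_right,
    Submodule.inner_orthogonalProjectionOnto_eq_of_mem_left, adjoint_inner_right]

lemma gf_partial_bound (B : ℝ) (hBnn : 0 ≤ B)
    (hub : ∀ h : H, Summable (fun j => v j ^ 2 * ‖Λ j (gfProj W j h)‖ ^ 2) ∧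
      ∑' j, v j ^ 2 * ‖Λ j (gfProj W j h)‖ ^ 2 ≤ B * ‖h‖ ^ 2)
    (g : ∀ j, Hs j) (s : Finset J) :
    ‖∑ j ∈ s, v j • gfProj W j (adjoint (Λ j) (g j))‖ ≤
      Real.sqrt B * Real.sqrt (∑ j ∈ s, ‖g j‖ ^ 2) := by
  set h : H := ∑ j ∈ s, v j • gfProj W j (adjoint (Λ j) (g j)) with hh
  have key : ‖h‖ ^ 2 ≤ (Real.sqrt B * Real.sqrt (∑ j ∈ s, ‖g j‖ ^ 2)) * ‖h‖ := by
    have e1 : ⟪h, h⟫_ℂ = ∑ j ∈ s, (v j : ℂ) * ⟪Λ j (gfProj W j h), g j⟫_ℂ := by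
      rw [hh]
      rw [inner_sum]
      exact Finset.sum_congr rfl fun j _ => gf_inner_term W v Λ h j (g j)
    have e2 : ‖h‖ ^ 2 ≤ ∑ j ∈ s, |v j| * ‖Λ j (gfProj W j h)‖ * ‖g j‖ := by
      have hns : ‖h‖ ^ 2 = RCLike.re ⟪h, h⟫_ℂ := (inner_self_eq_norm_sq h).symm
      rw [hns, e1]
      calc RCLike.re (∑ j ∈ s, (v j : ℂ) * ⟪Λ j (gfProj W j h), g j⟫_ℂ)
          ≤ ‖∑ j ∈ s, (v j : ℂ) * ⟪Λ j (gfProj W j h), g j⟫_ℂ‖ := RCLike.re_le_norm _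
        _ ≤ ∑ j ∈ s, ‖(v j : ℂ) * ⟪Λ j (gfProj W j h), g j⟫_ℂ‖ := norm_sum_le _ _
        _ ≤ ∑ j ∈ s, |v j| * ‖Λ j (gfProj W j h)‖ * ‖g j‖ := by
            refine Finset.sum_le_sum fun j _ => ?_
            rw [norm_mul, Complex.norm_real, Real.norm_eq_abs, mul_assoc]
            exact mul_le_mul_of_nonneg_left (norm_inner_le_norm _ _) (abs_nonneg _)
    have e3 : ∑ j ∈ s, |v j| * ‖Λ j (gfProj W j h)‖ * ‖g j‖ ≤
        Real.sqrt (B * ‖h‖ ^ 2) * Real.sqrt (∑ j ∈ s, ‖g j‖ ^ 2) := by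
      calc ∑ j ∈ s, |v j| * ‖Λ j (gfProj W j h)‖ * ‖g j‖
          ≤ Real.sqrt (∑ j ∈ s, (|v j| * ‖Λ j (gfProj W j h)‖) ^ 2) *
            Real.sqrt (∑ j ∈ s, ‖g j‖ ^ 2) := by
            have := Real.sum_mul_le_sqrt_mul_sqrt s
              (fun j => |v j| * ‖Λ j (gfProj W j h)‖) (fun j => ‖g j‖)
            simpa using this
        _ ≤ Real.sqrt (B * ‖h‖ ^ 2) * Real.sqrt (∑ j ∈ s, ‖g j‖ ^ 2) := by
            gcongr
            have he : ∑ j ∈ s, (|v j| * ‖Λ j (gfProj W j h)‖) ^ 2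
                = ∑ j ∈ s, v j ^ 2 * ‖Λ j (gfProj W j h)‖ ^ 2 := by
              refine Finset.sum_congr rfl fun j _ => by rw [mul_pow, sq_abs]
            rw [he]
            exact le_trans (Summable.sum_le_tsum s (fun j _ => by positivity) (hub h).1) (hub h).2
    have e4 : Real.sqrt (B * ‖h‖ ^ 2) = Real.sqrt B * ‖h‖ := by
      rw [Real.sqrt_mul hBnn, Real.sqrt_sq (norm_nonneg _)]
    calc ‖h‖ ^ 2 ≤ _ := e2
      _ ≤ _ := e3
      _ = _ := by rw [e4]; ring
  rcases eq_or_lt_of_le (norm_nonneg h) with h0 | h0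
  · rw [← h0]; positivity
  · rw [sq] at key
    exact le_of_mul_le_mul_right key h0

lemma gf_forward (A B : ℝ) (hA : 0 < A)
    (hfb : ∀ f : H, Summable (fun j => (v j) ^ 2 * ‖Λ j (gfProj W j f)‖ ^ 2) ∧
        A * ‖f‖ ^ 2 ≤ ∑' j, (v j) ^ 2 * ‖Λ j (gfProj W j f)‖ ^ 2 ∧
        ∑' j, (v j) ^ 2 * ‖Λ j (gfProj W j f)‖ ^ 2 ≤ B * ‖f‖ ^ 2) :
    ∃ T : lp Hs 2 →L[ℂ] H, Function.Surjective T ∧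
      ∀ g : lp Hs 2, HasSum (fun j => v j • gfProj W j (adjoint (Λ j) (g j))) (T g) := by
  have hB0 : (0:ℝ) ≤ max B 0 := le_max_right _ _
  have hub : ∀ f : H, Summable (fun j => v j ^ 2 * ‖Λ j (gfProj W j f)‖ ^ 2) ∧
      ∑' j, v j ^ 2 * ‖Λ j (gfProj W j f)‖ ^ 2 ≤ max B 0 * ‖f‖ ^ 2 := fun f =>
    ⟨(hfb f).1, le_trans (hfb f).2.2
      (mul_le_mul_of_nonneg_right (le_max_left B 0) (sq_nonneg _))⟩
  -- the analysis operator
  have memU : ∀ f : H, Memℓp (fun j => v j • Λ j (gfProj W j f)) 2 := fun f => by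
    apply memℓp_gen
    have he : (fun j => ‖v j • Λ j (gfProj W j f)‖ ^ ((2:ℝ≥0∞)).toReal)
        = fun j => v j ^ 2 * ‖Λ j (gfProj W j f)‖ ^ 2 := by
      funext j
      rw [gf_rpow_two, norm_smul, Real.norm_eq_abs, mul_pow, sq_abs]
    rw [he]
    exact (hfb f).1
  let U₀ : H →ₗ[ℂ] lp Hs 2 :=
    { toFun := fun f => ⟨fun j => v j • Λ j (gfProj W j f), memU f⟩
      map_add' := fun f g => by
        apply lp.ext
        funext j
        simp only [lp.coeFn_add, Pi.add_apply]
        show v j • Λ j (gfProj W j (f + g)) =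
          v j • Λ j (gfProj W j f) + v j • Λ j (gfProj W j g)
        rw [map_add, map_add, smul_add]
      map_smul' := fun c f => by
        apply lp.ext
        funext j
        simp only [lp.coeFn_smul, Pi.smul_apply, RingHom.id_apply]
        show v j • Λ j (gfProj W j (c • f)) = c • (v j • Λ j (gfProj W j f))
        rw [map_smul, map_smul, smul_comm] }
  have hU₀app : ∀ (f : H) (j : J), (U₀ f : ∀ j, Hs j) j = v j • Λ j (gfProj W j f) :=
    fun f j => rfl
  have hU₀ : ∀ f : H, ‖U₀ f‖ ≤ Real.sqrt (max B 0) * ‖f‖ := fun f => by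
    have h1 : ‖U₀ f‖ ^ 2 = ∑' j, v j ^ 2 * ‖Λ j (gfProj W j f)‖ ^ 2 := by
      rw [gf_norm_sq_lp]
      refine tsum_congr fun j => ?_
      rw [hU₀app, norm_smul, Real.norm_eq_abs, mul_pow, sq_abs]
    have h2 : ‖U₀ f‖ ^ 2 ≤ (Real.sqrt (max B 0) * ‖f‖) ^ 2 := by
      rw [h1, mul_pow, Real.sq_sqrt hB0]
      exact (hub f).2
    have h3 := Real.sqrt_le_sqrt h2
    rwa [Real.sqrt_sq (norm_nonneg _), Real.sqrt_sq (by positivity)] at h3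
  let U : H →L[ℂ] lp Hs 2 := U₀.mkContinuous (Real.sqrt (max B 0)) hU₀
  have hUapp : ∀ (f : H) (j : J), (U f : ∀ j, Hs j) j = v j • Λ j (gfProj W j f) :=
    fun f j => rfl
  let T : lp Hs 2 →L[ℂ] H := adjoint U
  have hhs : ∀ g : lp Hs 2,
      HasSum (fun j => v j • gfProj W j (adjoint (Λ j) (g j))) (T g) := by
    intro g
    have hg2 : Summable fun j => ‖g j‖ ^ 2 := gf_summable_sq g
    have hsum : Summable (fun j => v j • gfProj W j (adjoint (Λ j) (g j))) := by
      rw [summable_iff_vanishing]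
      intro e he
      rcases Metric.mem_nhds_iff.1 he with ⟨ε, εpos, hε⟩
      set c : ℝ := Real.sqrt (max B 0) + 1 with hc
      have hcpos : (0:ℝ) < c := by positivity
      set δ : ℝ := (ε / c) ^ 2 with hδ
      have hδpos : 0 < δ := by positivity
      obtain ⟨s, hs⟩ := summable_iff_vanishing.1 hg2 (Metric.ball 0 δ)
        (Metric.ball_mem_nhds 0 hδpos)
      refine ⟨s, fun t ht => hε ?_⟩
      have h1 := gf_partial_bound W v Λ (max B 0) hB0 hub (fun j => g j) t
      have h2 : ∑ j ∈ t, ‖g j‖ ^ 2 < δ := by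
        have h3 := hs t ht
        rw [Metric.mem_ball, dist_zero_right, Real.norm_eq_abs] at h3
        exact (le_abs_self _).trans_lt h3
      rw [Metric.mem_ball, dist_zero_right]
      calc ‖∑ j ∈ t, v j • gfProj W j (adjoint (Λ j) (g j))‖
          ≤ Real.sqrt (max B 0) * Real.sqrt (∑ j ∈ t, ‖g j‖ ^ 2) := h1
        _ ≤ c * Real.sqrt (∑ j ∈ t, ‖g j‖ ^ 2) := by
            have := Real.sqrt_nonneg (∑ j ∈ t, ‖g j‖ ^ 2)
            nlinarith [Real.sqrt_nonneg (max B 0)]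
        _ < c * (ε / c) := by
            refine mul_lt_mul_of_pos_left ?_ hcpos
            have h4 : Real.sqrt (∑ j ∈ t, ‖g j‖ ^ 2) < Real.sqrt δ :=
              Real.sqrt_lt_sqrt (by positivity) h2
            rwa [hδ, Real.sqrt_sq (by positivity)] at h4
        _ = ε := by field_simp
    have hTg : T g = ∑' j, v j • gfProj W j (adjoint (Λ j) (g j)) := by
      apply ext_inner_left ℂ
      intro f
      have e1 : ⟪f, T g⟫_ℂ = ⟪U f, g⟫_ℂ := adjoint_inner_right U f g
      have e2 : ⟪U f, g⟫_ℂ = ∑' j, ⟪(U f : ∀ j, Hs j) j, g j⟫_ℂ :=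
        (lp.hasSum_inner (U f) g).tsum_eq.symm
      have e3 : ∀ j, ⟪(U f : ∀ j, Hs j) j, g j⟫_ℂ
          = ⟪f, v j • gfProj W j (adjoint (Λ j) (g j))⟫_ℂ := by
        intro j
        rw [gf_inner_term W v Λ f j (g j), hUapp, ← Complex.coe_smul, inner_smul_left,
          Complex.conj_ofReal]
      have e4 : ⟪f, ∑' j, v j • gfProj W j (adjoint (Λ j) (g j))⟫_ℂ
          = ∑' j, ⟪f, v j • gfProj W j (adjoint (Λ j) (g j))⟫_ℂ := by
        exact ((hsum.hasSum.mapL (innerSL ℂ f)).tsum_eq).symm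
      rw [e1, e2, tsum_congr e3, ← e4]
    rw [hTg]
    exact hsum.hasSum
  -- surjectivity
  have hre : ∀ f : H, A * ‖f‖ ^ 2 ≤ RCLike.re ⟪T (U f), f⟫_ℂ := by
    intro f
    have e1 : ⟪T (U f), f⟫_ℂ = ⟪U f, U f⟫_ℂ := adjoint_inner_left U f (U f)
    rw [e1, inner_self_eq_norm_sq]
    have h1 : ‖U f‖ ^ 2 = ∑' j, v j ^ 2 * ‖Λ j (gfProj W j f)‖ ^ 2 := by
      rw [gf_norm_sq_lp]
      refine tsum_congr fun j => ?_
      rw [hUapp, norm_smul, Real.norm_eq_abs, mul_pow, sq_abs]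
    rw [h1]
    exact (hfb f).2.1
  have hlow : ∀ f : H, A * ‖f‖ ≤ ‖T (U f)‖ := by
    intro f
    rcases eq_or_lt_of_le (norm_nonneg f) with h0 | h0
    · rw [← h0]
      simpa using norm_nonneg (T (U f))
    · have h1 : A * ‖f‖ ^ 2 ≤ ‖T (U f)‖ * ‖f‖ :=
        le_trans (hre f) (le_trans (RCLike.re_le_norm _) (norm_inner_le_norm _ _))
      have h2 : (A * ‖f‖) * ‖f‖ ≤ ‖T (U f)‖ * ‖f‖ := by rw [mul_assoc, ← sq]; exact h1
      exact le_of_mul_le_mul_right h2 h0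
  let S : H →L[ℂ] H := T.comp U
  have hanti : AntilipschitzWith (⟨A, hA.le⟩ : ℝ≥0)⁻¹ S := by
    apply ContinuousLinearMap.antilipschitz_of_bound
    intro x
    have h3 : A * ‖x‖ ≤ ‖S x‖ := hlow x
    have h4 : ‖x‖ ≤ A⁻¹ * ‖S x‖ := by
      calc ‖x‖ = A⁻¹ * (A * ‖x‖) := by field_simp
        _ ≤ A⁻¹ * ‖S x‖ := mul_le_mul_of_nonneg_left h3 (by positivity)
    exact h4
  have hclosed : IsClosed (Set.range S) := hanti.isClosed_range S.uniformContinuous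
  let K : Submodule ℂ H := LinearMap.range (S : H →ₗ[ℂ] H)
  have hKc : IsClosed (K : Set H) := by
    have : (K : Set H) = Set.range S := LinearMap.coe_range _
    rw [this]
    exact hclosed
  haveI : CompleteSpace K := hKc.completeSpace_coe
  have hKbot : Kᗮ = ⊥ := by
    rw [Submodule.eq_bot_iff]
    intro x hx
    have hmem : S x ∈ K := LinearMap.mem_range_self _ x
    have hx0 : ⟪S x, x⟫_ℂ = 0 := (Submodule.mem_orthogonal K x).1 hx (S x) hmem
    have h5 : A * ‖x‖ ^ 2 ≤ RCLike.re ⟪S x, x⟫_ℂ := hre x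
    rw [hx0] at h5
    simp only [map_zero] at h5
    have hx2 : ‖x‖ ^ 2 = 0 := le_antisymm (by nlinarith) (sq_nonneg _)
    exact norm_eq_zero.1 (sq_eq_zero_iff.1 hx2)
  have hKtop : K = ⊤ := Submodule.orthogonal_eq_bot_iff.1 hKbot
  have hTsurj : Function.Surjective T := by
    intro y
    have hyK : y ∈ K := by rw [hKtop]; trivial
    obtain ⟨x, hx⟩ := hyK
    exact ⟨U x, hx⟩
  exact ⟨T, hTsurj, hhs⟩

lemma gf_backward (T : lp Hs 2 →L[ℂ] H) (hTsurj : Function.Surjective T)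
    (hT : ∀ g : lp Hs 2, HasSum (fun j => v j • gfProj W j (adjoint (Λ j) (g j))) (T g)) :
    ∃ A B : ℝ, 0 < A ∧ A ≤ B ∧
      ∀ f : H,
        Summable (fun j => (v j) ^ 2 * ‖Λ j (gfProj W j f)‖ ^ 2) ∧
        A * ‖f‖ ^ 2 ≤ ∑' j, (v j) ^ 2 * ‖Λ j (gfProj W j f)‖ ^ 2 ∧
        ∑' j, (v j) ^ 2 * ‖Λ j (gfProj W j f)‖ ^ 2 ≤ B * ‖f‖ ^ 2 := by
  classical
  obtain ⟨C, hC, hCy⟩ := T.exists_preimage_norm_le hTsurj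
  refine ⟨(C ^ 2)⁻¹, max (‖T‖ ^ 2) (C ^ 2)⁻¹, by positivity, le_max_right _ _, ?_⟩
  intro f
  -- partial sums are bounded
  have key : ∀ s : Finset J,
      ∑ j ∈ s, (v j) ^ 2 * ‖Λ j (gfProj W j f)‖ ^ 2 ≤ ‖T‖ ^ 2 * ‖f‖ ^ 2 := by
    intro s
    set gs : lp Hs 2 := ∑ j ∈ s, lp.single 2 j (v j • Λ j (gfProj W j f)) with hgs
    have hgsapp : ∀ j, (gs : ∀ j, Hs j) j =
        if j ∈ s then v j • Λ j (gfProj W j f) else 0 := by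
      intro j
      rw [hgs, lp.coeFn_sum, Finset.sum_apply]
      by_cases hj : j ∈ s
      · rw [if_pos hj]
        rw [Finset.sum_eq_single_of_mem j hj
          (fun i hi hne => lp.single_apply_ne 2 i _ hne.symm)]
        exact lp.single_apply_self 2 j _
      · rw [if_neg hj]
        refine Finset.sum_eq_zero fun i hi => ?_
        refine lp.single_apply_ne 2 i _ ?_
        rintro rfl
        exact hj hi
    have hTgs : T gs = ∑ j ∈ s, v j • gfProj W j (adjoint (Λ j) (gs j)) := by
      refine (hT gs).unique (hasSum_sum_of_ne_finset_zero fun j hj => ?_)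
      rw [hgsapp j, if_neg hj]
      simp
    have hinner : ⟪f, T gs⟫_ℂ =
        ((∑ j ∈ s, (v j) ^ 2 * ‖Λ j (gfProj W j f)‖ ^ 2 : ℝ) : ℂ) := by
      rw [hTgs, inner_sum, Complex.ofReal_sum]
      refine Finset.sum_congr rfl fun j hj => ?_
      rw [gf_inner_term W v Λ f j (gs j), hgsapp j, if_pos hj, ← Complex.coe_smul,
        inner_smul_right, inner_self_eq_norm_sq_to_K]
      rw [Complex.ofReal_mul]
      push_cast
      ring_nf
      rfl
    have hgsnorm : ‖gs‖ ^ 2 = ∑ j ∈ s, (v j) ^ 2 * ‖Λ j (gfProj W j f)‖ ^ 2 := by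
      have h5 := lp.norm_sum_single (p := 2) (by norm_num)
        (fun j => v j • Λ j (gfProj W j f)) s
      simp only [gf_rpow_two] at h5
      rw [hgs, h5]
      exact Finset.sum_congr rfl fun j _ => by
        rw [norm_smul, Real.norm_eq_abs, mul_pow, sq_abs]
    set σ : ℝ := ∑ j ∈ s, (v j) ^ 2 * ‖Λ j (gfProj W j f)‖ ^ 2 with hσ
    have hσnn : 0 ≤ σ := Finset.sum_nonneg fun j _ => by positivity
    have habs : σ ≤ ‖f‖ * (‖T‖ * ‖gs‖) := by
      have h1 : ‖⟪f, T gs⟫_ℂ‖ ≤ ‖f‖ * ‖T gs‖ := norm_inner_le_norm _ _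
      rw [hinner, Complex.norm_real, Real.norm_eq_abs] at h1
      have h3 : σ ≤ |σ| := le_abs_self _
      have h4 : ‖T gs‖ ≤ ‖T‖ * ‖gs‖ := T.le_opNorm gs
      calc σ ≤ |σ| := h3
        _ ≤ ‖f‖ * ‖T gs‖ := h1
        _ ≤ ‖f‖ * (‖T‖ * ‖gs‖) := mul_le_mul_of_nonneg_left h4 (norm_nonneg f)
    have hgs' : ‖gs‖ = Real.sqrt σ := by
      have h6 := congrArg Real.sqrt hgsnorm
      rwa [Real.sqrt_sq (norm_nonneg _)] at h6
    rcases eq_or_lt_of_le hσnn with h0 | h0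
    · rw [← h0]; positivity
    · have hsqpos : 0 < Real.sqrt σ := Real.sqrt_pos.2 h0
      have hs2 : Real.sqrt σ * Real.sqrt σ ≤ (‖f‖ * ‖T‖) * Real.sqrt σ := by
        rw [Real.mul_self_sqrt hσnn]
        rw [hgs'] at habs
        calc σ ≤ ‖f‖ * (‖T‖ * Real.sqrt σ) := habs
          _ = (‖f‖ * ‖T‖) * Real.sqrt σ := by ring
      have h7 : Real.sqrt σ ≤ ‖f‖ * ‖T‖ := le_of_mul_le_mul_right hs2 hsqpos
      nlinarith [Real.mul_self_sqrt hσnn, Real.sqrt_nonneg σ, norm_nonneg f,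
        norm_nonneg (T : lp Hs 2 →L[ℂ] H)]
  have hsummable : Summable (fun j => (v j) ^ 2 * ‖Λ j (gfProj W j f)‖ ^ 2) :=
    summable_of_sum_le (fun j => by positivity) key
  have hupper : ∑' j, (v j) ^ 2 * ‖Λ j (gfProj W j f)‖ ^ 2
      ≤ max (‖T‖ ^ 2) (C ^ 2)⁻¹ * ‖f‖ ^ 2 :=
    le_trans (Summable.tsum_le_of_sum_le hsummable key)
      (mul_le_mul_of_nonneg_right (le_max_left _ _) (sq_nonneg _))
  refine ⟨hsummable, ?_, hupper⟩
  -- lower bound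
  set t : ℝ := ∑' j, (v j) ^ 2 * ‖Λ j (gfProj W j f)‖ ^ 2 with ht
  have htnn : 0 ≤ t := tsum_nonneg fun j => by positivity
  obtain ⟨g, hgf, hgnorm⟩ := hCy f
  have hg2 : Summable fun j => ‖g j‖ ^ 2 := gf_summable_sq g
  have hbnd : ∀ s : Finset J,
      ∑ j ∈ s, ‖⟪f, v j • gfProj W j (adjoint (Λ j) (g j))⟫_ℂ‖ ≤
        Real.sqrt t * ‖g‖ := by
    intro s
    have step1 : ∀ j, ‖⟪f, v j • gfProj W j (adjoint (Λ j) (g j))⟫_ℂ‖ ≤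
        (|v j| * ‖Λ j (gfProj W j f)‖) * ‖g j‖ := by
      intro j
      rw [gf_inner_term W v Λ f j (g j), norm_mul, Complex.norm_real, Real.norm_eq_abs,
        mul_assoc]
      exact mul_le_mul_of_nonneg_left (norm_inner_le_norm _ _) (abs_nonneg _)
    calc ∑ j ∈ s, ‖⟪f, v j • gfProj W j (adjoint (Λ j) (g j))⟫_ℂ‖
        ≤ ∑ j ∈ s, (|v j| * ‖Λ j (gfProj W j f)‖) * ‖g j‖ :=
          Finset.sum_le_sum fun j _ => step1 j
      _ ≤ Real.sqrt (∑ j ∈ s, (|v j| * ‖Λ j (gfProj W j f)‖) ^ 2) *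
          Real.sqrt (∑ j ∈ s, ‖g j‖ ^ 2) := by
          have := Real.sum_mul_le_sqrt_mul_sqrt s
            (fun j => |v j| * ‖Λ j (gfProj W j f)‖) (fun j => ‖g j‖)
          simpa using this
      _ ≤ Real.sqrt t * ‖g‖ := by
          have he : ∑ j ∈ s, (|v j| * ‖Λ j (gfProj W j f)‖) ^ 2
              = ∑ j ∈ s, (v j) ^ 2 * ‖Λ j (gfProj W j f)‖ ^ 2 :=
            Finset.sum_congr rfl fun j _ => by rw [mul_pow, sq_abs]
          have h1 : Real.sqrt (∑ j ∈ s, (|v j| * ‖Λ j (gfProj W j f)‖) ^ 2)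
              ≤ Real.sqrt t := by
            apply Real.sqrt_le_sqrt
            rw [he, ht]
            exact Summable.sum_le_tsum s (fun j _ => by positivity) hsummable
          have h2 : Real.sqrt (∑ j ∈ s, ‖g j‖ ^ 2) ≤ ‖g‖ := by
            have h3 : ∑ j ∈ s, ‖g j‖ ^ 2 ≤ ‖g‖ ^ 2 := by
              rw [gf_norm_sq_lp g]
              exact Summable.sum_le_tsum s (fun j _ => by positivity) hg2
            have h4 := Real.sqrt_le_sqrt h3
            rwa [Real.sqrt_sq (norm_nonneg _)] at h4
          exact mul_le_mul h1 h2 (Real.sqrt_nonneg _) (Real.sqrt_nonneg _)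
  have hsum_norms : Summable (fun j => ‖⟪f, v j • gfProj W j (adjoint (Λ j) (g j))⟫_ℂ‖) :=
    summable_of_sum_le (fun j => norm_nonneg _) hbnd
  have e1 : ⟪f, T g⟫_ℂ = ∑' j, ⟪f, v j • gfProj W j (adjoint (Λ j) (g j))⟫_ℂ :=
    (((hT g).mapL (innerSL ℂ f)).tsum_eq).symm
  have hfsq : ‖f‖ ^ 2 ≤ Real.sqrt t * (C * ‖f‖) := by
    calc ‖f‖ ^ 2 = RCLike.re ⟪f, T g⟫_ℂ := by
          rw [hgf]
          exact (inner_self_eq_norm_sq f).symm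
      _ ≤ ‖⟪f, T g⟫_ℂ‖ := RCLike.re_le_norm _
      _ = ‖∑' j, ⟪f, v j • gfProj W j (adjoint (Λ j) (g j))⟫_ℂ‖ := by rw [e1]
      _ ≤ ∑' j, ‖⟪f, v j • gfProj W j (adjoint (Λ j) (g j))⟫_ℂ‖ :=
          norm_tsum_le_tsum_norm hsum_norms
      _ ≤ Real.sqrt t * ‖g‖ := Summable.tsum_le_of_sum_le hsum_norms hbnd
      _ ≤ Real.sqrt t * (C * ‖f‖) :=
          mul_le_mul_of_nonneg_left hgnorm (Real.sqrt_nonneg _)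
  rcases eq_or_lt_of_le (norm_nonneg f) with h0 | h0
  · rw [← h0]
    simpa using htnn
  · have h1 : ‖f‖ * ‖f‖ ≤ (Real.sqrt t * C) * ‖f‖ := by
      rw [← sq]
      calc ‖f‖ ^ 2 ≤ Real.sqrt t * (C * ‖f‖) := hfsq
        _ = (Real.sqrt t * C) * ‖f‖ := by ring
    have h2 : ‖f‖ ≤ Real.sqrt t * C := le_of_mul_le_mul_right h1 h0
    have h3 : ‖f‖ ^ 2 ≤ t * C ^ 2 := by
      nlinarith [Real.mul_self_sqrt htnn, Real.sqrt_nonneg t, h2, norm_nonneg f]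
    calc (C ^ 2)⁻¹ * ‖f‖ ^ 2 ≤ (C ^ 2)⁻¹ * (t * C ^ 2) :=
          mul_le_mul_of_nonneg_left h3 (by positivity)
      _ = t := by field_simp


end Aux

/-- `Λ = (W_j, Λ_j, v_j)` is a g-fusion frame for `H` iff the synthesis operator
`T_Λ` is well defined, bounded and surjective. -/
theorem gfusion_frame_iff_synthesis_surjective
    {H : Type*} [NormedAddCommGroup H] [InnerProductSpace ℂ H] [CompleteSpace H]
    {J : Type*} [Countable J]
    {Hs : J → Type*} [∀ j, NormedAddCommGroup (Hs j)] [∀ j, InnerProductSpace ℂ (Hs j)]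
    [∀ j, CompleteSpace (Hs j)]
    (W : J → Submodule ℂ H) [∀ j, CompleteSpace (W j)]
    (v : J → ℝ) (hv : ∀ j, 0 < v j)
    (Λ : ∀ j, H →L[ℂ] Hs j) :
    (∃ A B : ℝ, 0 < A ∧ A ≤ B ∧
      ∀ f : H,
        Summable (fun j => (v j) ^ 2 * ‖Λ j (gfProj W j f)‖ ^ 2) ∧
        A * ‖f‖ ^ 2 ≤ ∑' j, (v j) ^ 2 * ‖Λ j (gfProj W j f)‖ ^ 2 ∧
        ∑' j, (v j) ^ 2 * ‖Λ j (gfProj W j f)‖ ^ 2 ≤ B * ‖f‖ ^ 2)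
      ↔
    ∃ T : lp Hs 2 →L[ℂ] H, Function.Surjective T ∧
      ∀ g : lp Hs 2,
        HasSum (fun j => v j • gfProj W j (adjoint (Λ j) (g j))) (T g) := by
  constructor
  · rintro ⟨A, B, hA, hAB, hfb⟩
    exact gf_forward W v Λ A B hA hfb
  · rintro ⟨T, hTsurj, hT⟩
    exact gf_backward W v Λ T hTsurj hT
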